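/- Given the 1D ReLU loss h(a) = Σ_{i=1}^m (max(0, y_i - a·x_i))² with all x_i > 0 and distinct ratios r_i = y_i/x_i, the set of points where h is not three-times differentiable equals {r_1, …, r_m}; hence the set {y_i/x_i} is recoverable from h. -/

import Mathlib

open Filter Asymptotics Topology

/-- derivative of `s ↦ (max 0 s)^2` is `2 * max 0 s`. -/
lemma q_hasDerivAt (t : ℝ) : HasDerivAt (fun s : ℝ => max 0 s ^ 2) (2 * max 0 t) t := by
  rcases lt_trichotomy t 0 with ht | ht | ht
  · have hev : (fun s : ℝ => max 0 s ^ 2) =ᶠ[𝓝 t] fun _ => (0 : ℝ) := by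
      filter_upwards [eventually_lt_nhds ht] with s hs
      rw [max_eq_left hs.le]; ring
    have := (hasDerivAt_const t (0 : ℝ)).congr_of_eventuallyEq hev
    rw [max_eq_left ht.le, mul_zero]; exact this
  · subst ht
    rw [hasDerivAt_iff_isLittleO]
    have h1 : (fun s : ℝ => max 0 s ^ 2) =O[𝓝 (0:ℝ)] fun s : ℝ => s ^ 2 := by
      apply isBigO_of_le
      intro s
      have h2 : |max 0 s| ≤ |s| := by
        rcases le_total 0 s with h | h
        · rw [max_eq_right h]
        · rw [max_eq_left h, abs_zero]; exact abs_nonneg s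
      calc ‖max 0 s ^ 2‖ = |max 0 s| ^ 2 := by rw [Real.norm_eq_abs, abs_pow]
        _ ≤ |s| ^ 2 := by gcongr
        _ = ‖s ^ 2‖ := by rw [Real.norm_eq_abs, abs_pow]
    have h3 := h1.trans_isLittleO (isLittleO_pow_id (one_lt_two))
    simpa using h3
  · have hev : (fun s : ℝ => max 0 s ^ 2) =ᶠ[𝓝 t] fun s => s ^ 2 := by
      filter_upwards [eventually_gt_nhds ht] with s hs
      rw [max_eq_right hs.le]
    have := (hasDerivAt_pow 2 t).congr_of_eventuallyEq hev
    simpa [max_eq_right ht.le, mul_comm] using this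

lemma max0_not_diff : ¬ DifferentiableAt ℝ (fun t : ℝ => max 0 t) 0 := by
  intro h
  have habs : (fun t : ℝ => |t|) = fun t : ℝ => 2 * max 0 t - t := by
    funext t
    rcases le_total 0 t with h | h
    · rw [max_eq_right h, abs_of_nonneg h]; ring
    · rw [max_eq_left h, abs_of_nonpos h]; ring
  have : DifferentiableAt ℝ (fun t : ℝ => |t|) 0 := by
    rw [habs]
    exact (h.const_mul 2).sub differentiableAt_id
  exact not_differentiableAt_abs_zero this

/-- each term is smooth at points where `y - a₀ * x ≠ 0`. -/
lemma term_smooth (xi yi a₀ : ℝ) (h : yi - a₀ * xi ≠ 0) :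
    ContDiffAt ℝ 3 (fun a : ℝ => max 0 (yi - a * xi) ^ 2) a₀ := by
  have hc : Continuous fun a : ℝ => yi - a * xi := by continuity
  rcases h.lt_or_gt with hlt | hlt
  · have hev : (fun a : ℝ => max 0 (yi - a * xi) ^ 2) =ᶠ[𝓝 a₀] fun _ => (0 : ℝ) := by
      have : ∀ᶠ a in 𝓝 a₀, yi - a * xi < 0 :=
        (hc.continuousAt).eventually_lt continuousAt_const hlt
      filter_upwards [this] with a ha
      rw [max_eq_left ha.le]; ring
    exact contDiffAt_const.congr_of_eventuallyEq hev
  · have hev : (fun a : ℝ => max 0 (yi - a * xi) ^ 2) =ᶠ[𝓝 a₀] fun a => (yi - a * xi) ^ 2 := by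
      have : ∀ᶠ a in 𝓝 a₀, 0 < yi - a * xi :=
        continuousAt_const.eventually_lt (hc.continuousAt) hlt
      filter_upwards [this] with a ha
      rw [max_eq_right ha.le]
    have hsm : ContDiffAt ℝ 3 (fun a : ℝ => (yi - a * xi) ^ 2) a₀ :=
      (((contDiff_const.sub (contDiff_id.mul contDiff_const)).pow 2).contDiffAt)
    exact hsm.congr_of_eventuallyEq hev

/-- the single term is not C^3 at its kink. -/
lemma term_not_smooth (xi yi : ℝ) (hxi : 0 < xi) :
    ¬ ContDiffAt ℝ 3 (fun a : ℝ => max 0 (yi - a * xi) ^ 2) (yi / xi) := by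
  intro h
  set a₀ := yi / xi with ha₀
  have hder : ∀ a : ℝ, HasDerivAt (fun a : ℝ => max 0 (yi - a * xi) ^ 2)
      (2 * max 0 (yi - a * xi) * (-xi)) a := by
    intro a
    have hinner : HasDerivAt (fun a : ℝ => yi - a * xi) (-xi) a := by
      simpa using ((hasDerivAt_id a).mul_const xi).const_sub yi
    exact (q_hasDerivAt (yi - a * xi)).comp a hinner
  have hderiv_eq : deriv (fun a : ℝ => max 0 (yi - a * xi) ^ 2)
      = fun a : ℝ => 2 * max 0 (yi - a * xi) * (-xi) := by
    funext a; exact (hder a).deriv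
  obtain ⟨u, hu, hcd⟩ := h.contDiffOn le_rfl (by simp)
  have hopen : IsOpen (interior u) := isOpen_interior
  have hmem : a₀ ∈ interior u := mem_interior_iff_mem_nhds.2 hu
  have hcd' : ContDiffOn ℝ 3 (fun a : ℝ => max 0 (yi - a * xi) ^ 2) (interior u) :=
    hcd.mono interior_subset
  have hd2 : ContDiffOn ℝ 2 (deriv (fun a : ℝ => max 0 (yi - a * xi) ^ 2)) (interior u) :=
    hcd'.deriv_of_isOpen hopen (by norm_num)
  have hdiff : DifferentiableAt ℝ (deriv (fun a : ℝ => max 0 (yi - a * xi) ^ 2)) a₀ :=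
    (hd2.contDiffAt (hopen.mem_nhds hmem)).differentiableAt (by norm_num)
  rw [hderiv_eq] at hdiff
  have hF : DifferentiableAt ℝ (fun a : ℝ => max 0 (yi - a * xi)) a₀ := by
    have h1 : DifferentiableAt ℝ
        (fun a : ℝ => (2 * max 0 (yi - a * xi) * (-xi)) * (-1 / (2 * xi))) a₀ :=
      hdiff.mul_const _
    have h2 : (fun a : ℝ => (2 * max 0 (yi - a * xi) * (-xi)) * (-1 / (2 * xi)))
        = fun a : ℝ => max 0 (yi - a * xi) := by
      funext a; field_simp
    rwa [h2] at h1
  have hφ : DifferentiableAt ℝ (fun t : ℝ => (yi - t) / xi) 0 := by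
    fun_prop
  have hφ0 : (yi - (0:ℝ)) / xi = a₀ := by rw [ha₀]; ring_nf
  have hcomp : DifferentiableAt ℝ
      ((fun a : ℝ => max 0 (yi - a * xi)) ∘ fun t : ℝ => (yi - t) / xi) 0 := by
    apply DifferentiableAt.comp
    · rw [hφ0]; exact hF
    · exact hφ
  have heq : ((fun a : ℝ => max 0 (yi - a * xi)) ∘ fun t : ℝ => (yi - t) / xi)
      = fun t : ℝ => max 0 t := by
    funext t
    simp only [Function.comp_apply]
    congr 1
    field_simp
    ring
  rw [heq] at hcomp
  exact max0_not_diff hcomp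

theorem stmt_4 (m : ℕ) (x y : Fin m → ℝ) (hx : ∀ i, 0 < x i)
    (hdist : ∀ i j, y i / x i = y j / x j → i = j) :
    {a₀ : ℝ | ¬ ContDiffAt ℝ 3 (fun a : ℝ => ∑ i, max 0 (y i - a * x i) ^ 2) a₀}
      = Set.range fun i => y i / x i := by
  ext a₀
  simp only [Set.mem_setOf_eq, Set.mem_range]
  constructor
  · intro h
    by_contra hno
    push_neg at hno
    apply h
    apply ContDiffAt.sum
    intro i _
    apply term_smooth
    intro hzero
    apply hno i
    have hxi := (hx i).ne'
    field_simp
    linarith [sub_eq_zero.mp hzero]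
  · rintro ⟨j, rfl⟩
    intro h
    have hS : ContDiffAt ℝ 3
        (fun a : ℝ => ∑ i ∈ Finset.univ.erase j, max 0 (y i - a * x i) ^ 2) (y j / x j) := by
      apply ContDiffAt.sum
      intro i hi
      apply term_smooth
      intro hzero
      have hxj := (hx j).ne'
      have hxi := (hx i).ne'
      have : y i / x i = y j / x j := by
        have h1 : y i = (y j / x j) * x i := by linarith [sub_eq_zero.mp hzero]
        rw [h1]; field_simp
      exact (Finset.mem_erase.mp hi).1 (hdist i j this)
    have hgj : ContDiffAt ℝ 3 (fun a : ℝ => max 0 (y j - a * x j) ^ 2) (y j / x j) := by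
      have hsub := h.sub hS
      have heq : (fun a : ℝ => (∑ i, max 0 (y i - a * x i) ^ 2)
          - ∑ i ∈ Finset.univ.erase j, max 0 (y i - a * x i) ^ 2)
          = fun a : ℝ => max 0 (y j - a * x j) ^ 2 := by
        funext a
        rw [← Finset.add_sum_erase Finset.univ _ (Finset.mem_univ j)]
        ring
      rwa [heq] at hsub
    exact term_not_smooth (x j) (y j) (hx j) hgj
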